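/- Let g : {-1,1}^n → {-1,1} be a Boolean function with Fourier entropy H = H(ĝ²), and let δ ∈ (0,1]. Define the multilinear polynomial p by p̂(S) = ĝ(S) if |ĝ(S)| ≥ 2^{−H/(2δ)} and p̂(S) = 0 otherwise. Then p has at most 2^{H/δ} nonzero Fourier coefficients, and E_x[(g(x) − p(x))²] ≤ δ. -/

import Mathlib

open Finset

/-- The real value (`1` or `-1`) encoded by a Boolean. -/
noncomputable def bsgn (b : Bool) : ℝ := if b then 1 else -1

/-- The character `χ_S(x) = ∏_{i ∈ S} x_i` on the hypercube `{-1,1}^n`. -/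
noncomputable def chi {n : ℕ} (S : Finset (Fin n)) (x : Fin n → Bool) : ℝ :=
  ∏ i ∈ S, bsgn (x i)

/-- The Fourier coefficient `f̂(S) = E_x [f(x)·χ_S(x)]`. -/
noncomputable def fCoeff {n : ℕ} (f : (Fin n → Bool) → ℝ) (S : Finset (Fin n)) : ℝ :=
  (∑ x : Fin n → Bool, f x * chi S x) / 2 ^ n

/-- The Fourier (Shannon) entropy `H(f̂²) = Σ_S f̂(S)² log₂(1/f̂(S)²)`. -/
noncomputable def fEntropy {n : ℕ} (f : (Fin n → Bool) → ℝ) : ℝ :=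
  ∑ S : Finset (Fin n), (fCoeff f S) ^ 2 * Real.logb 2 (1 / (fCoeff f S) ^ 2)

/-- The Fourier min-entropy `H_∞(f̂²) = min_{S : f̂(S) ≠ 0} log₂(1/f̂(S)²)`. -/
noncomputable def fMinEntropy {n : ℕ} (f : (Fin n → Bool) → ℝ) : ℝ :=
  sInf {y : ℝ | ∃ S : Finset (Fin n),
    fCoeff f S ≠ 0 ∧ y = Real.logb 2 (1 / (fCoeff f S) ^ 2)}

/-- The total influence `Inf(f) = Σ_S |S|·f̂(S)²`. -/
noncomputable def totalInf {n : ℕ} (f : (Fin n → Bool) → ℝ) : ℝ :=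
  ∑ S : Finset (Fin n), (S.card : ℝ) * (fCoeff f S) ^ 2

/-- `f` is a Boolean (`±1`-valued) function. -/
def IsBooleanFunc {n : ℕ} (f : (Fin n → Bool) → ℝ) : Prop := ∀ x, f x = 1 ∨ f x = -1

lemma bsgn_mul_self (b : Bool) : bsgn b * bsgn b = 1 := by cases b <;> simp [bsgn]

lemma sum_chi {n : ℕ} (U : Finset (Fin n)) :
    ∑ x : Fin n → Bool, chi U x = if U = ∅ then (2:ℝ)^n else 0 := by
  have h : ∀ x : Fin n → Bool, chi U x = ∏ i, (if i ∈ U then bsgn (x i) else 1) := by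
    intro x
    rw [chi, ← Finset.prod_filter]
    congr 1
    simp
  simp_rw [h]
  have key := Finset.sum_prod_piFinset (ι := Fin n) (univ : Finset Bool)
    (fun i b => if i ∈ U then bsgn b else 1)
  rw [← Fintype.piFinset_univ, key]
  rcases eq_or_ne U ∅ with rfl | hU
  · simp [bsgn]
  · rw [if_neg hU]
    obtain ⟨i, hi⟩ := Finset.nonempty_iff_ne_empty.2 hU
    refine Finset.prod_eq_zero (Finset.mem_univ i) ?_
    simp [hi, bsgn]

lemma chi_mul_chi {n : ℕ} (S T : Finset (Fin n)) (x : Fin n → Bool) :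
    chi S x * chi T x = chi (symmDiff S T) x := by
  have hS : S = (S \ T) ∪ (S ∩ T) := by
    ext i; simp only [Finset.mem_union, Finset.mem_sdiff, Finset.mem_inter]; tauto
  have hT : T = (T \ S) ∪ (S ∩ T) := by
    ext i; simp only [Finset.mem_union, Finset.mem_sdiff, Finset.mem_inter]; tauto
  have h1 : chi S x = chi (S \ T) x * chi (S ∩ T) x := by
    rw [chi, chi, chi, ← Finset.prod_union (by
      simp only [Finset.disjoint_left, Finset.mem_sdiff, Finset.mem_inter]; tauto), ← hS]
  have h2 : chi T x = chi (T \ S) x * chi (S ∩ T) x := by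
    rw [chi, chi, chi, ← Finset.prod_union (by
      simp only [Finset.disjoint_left, Finset.mem_sdiff, Finset.mem_inter]; tauto), ← hT]
  have h3 : chi (symmDiff S T) x = chi (S \ T) x * chi (T \ S) x := by
    rw [chi, chi, chi, ← Finset.prod_union (by
      simp only [Finset.disjoint_left, Finset.mem_sdiff]; tauto)]
    rfl
  have h4 : chi (S ∩ T) x * chi (S ∩ T) x = 1 := by
    rw [chi, ← Finset.prod_mul_distrib]
    exact Finset.prod_eq_one fun i _ => bsgn_mul_self _
  rw [h1, h2, h3]
  calc chi (S \ T) x * chi (S ∩ T) x * (chi (T \ S) x * chi (S ∩ T) x)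
      = chi (S \ T) x * chi (T \ S) x * (chi (S ∩ T) x * chi (S ∩ T) x) := by ring
    _ = chi (S \ T) x * chi (T \ S) x := by rw [h4, mul_one]

lemma sum_chi_mul_chi {n : ℕ} (S T : Finset (Fin n)) :
    ∑ x : Fin n → Bool, chi S x * chi T x = if S = T then (2:ℝ)^n else 0 := by
  simp_rw [chi_mul_chi, sum_chi]
  congr 1
  simp [symmDiff_eq_bot]


lemma sum_chi_at {n : ℕ} (x y : Fin n → Bool) :
    ∑ S : Finset (Fin n), chi S x * chi S y = if x = y then (2:ℝ)^n else 0 := by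
  have h : ∀ S : Finset (Fin n), chi S x * chi S y
      = ∏ i ∈ S, (bsgn (x i) * bsgn (y i)) := by
    intro S; rw [chi, chi, Finset.prod_mul_distrib]
  simp_rw [h]
  have key := Finset.prod_add (fun i : Fin n => bsgn (x i) * bsgn (y i))
    (fun _ => (1:ℝ)) Finset.univ
  simp only [Finset.prod_const_one, mul_one, Finset.powerset_univ] at key
  rw [← key]
  have hc : ∀ i : Fin n, bsgn (x i) * bsgn (y i) + 1
      = if x i = y i then (2:ℝ) else 0 := by
    intro i; cases hx : x i <;> cases hy : y i <;> norm_num [bsgn]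
  simp_rw [hc]
  rcases eq_or_ne x y with rfl | hxy
  · simp
  · rw [if_neg hxy]
    obtain ⟨i, hi⟩ := Function.ne_iff.1 hxy
    exact Finset.prod_eq_zero (Finset.mem_univ i) (by simp [hi])

lemma parseval {n : ℕ} (f : (Fin n → Bool) → ℝ) :
    ∑ S : Finset (Fin n), (fCoeff f S) ^ 2 = (∑ x : Fin n → Bool, f x ^ 2) / 2 ^ n := by
  have h2 : ((2:ℝ) ^ n) ≠ 0 := by positivity
  have expand : ∀ S : Finset (Fin n), (fCoeff f S) ^ 2
      = (∑ x : Fin n → Bool, ∑ y : Fin n → Bool,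
          f x * f y * (chi S x * chi S y)) / ((2:ℝ)^n * 2^n) := by
    intro S
    rw [fCoeff, div_pow, sq, Finset.sum_mul_sum]
    congr 1
    · exact Finset.sum_congr rfl fun x _ => Finset.sum_congr rfl fun y _ => by ring
    · ring
  simp_rw [expand, ← Finset.sum_div]
  rw [Finset.sum_comm]
  have swap : ∀ x : Fin n → Bool,
      ∑ S : Finset (Fin n), ∑ y : Fin n → Bool, f x * f y * (chi S x * chi S y)
      = f x ^ 2 * 2 ^ n := by
    intro x
    rw [Finset.sum_comm]
    have : ∀ y : Fin n → Bool,
        ∑ S : Finset (Fin n), f x * f y * (chi S x * chi S y)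
        = f x * f y * (if x = y then (2:ℝ)^n else 0) := by
      intro y
      rw [← Finset.mul_sum, sum_chi_at]
    simp_rw [this, mul_ite, mul_zero]
    rw [Finset.sum_ite_eq (Finset.univ : Finset (Fin n → Bool)) x
      (fun y => f x * f y * (2:ℝ)^n)]
    simp [sq, mul_assoc]
  simp_rw [swap]
  rw [← Finset.sum_mul]
  field_simp


lemma fCoeff_comb {n : ℕ} (c : Finset (Fin n) → ℝ) (p : (Fin n → Bool) → ℝ)
    (hp : ∀ x, p x = ∑ S : Finset (Fin n), c S * chi S x) (T : Finset (Fin n)) :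
    fCoeff p T = c T := by
  have h2 : ((2:ℝ) ^ n) ≠ 0 := by positivity
  rw [fCoeff]
  simp_rw [hp, Finset.sum_mul, mul_assoc]
  rw [Finset.sum_comm]
  have : ∀ S : Finset (Fin n), ∑ x : Fin n → Bool, c S * (chi S x * chi T x)
      = c S * (if S = T then (2:ℝ)^n else 0) := by
    intro S; rw [← Finset.mul_sum, sum_chi_mul_chi]
  simp_rw [this, mul_ite, mul_zero]
  rw [Finset.sum_ite_eq' (Finset.univ : Finset (Finset (Fin n))) T
    (fun S => c S * (2:ℝ)^n)]
  simp [h2]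

lemma fCoeff_sub {n : ℕ} (f g : (Fin n → Bool) → ℝ) (S : Finset (Fin n)) :
    fCoeff (fun x => f x - g x) S = fCoeff f S - fCoeff g S := by
  simp [fCoeff, sub_mul, Finset.sum_sub_distrib, sub_div]


/-- Let `g` be Boolean with Fourier entropy `H = H(ĝ²)` and `δ ∈ (0,1]`.
Define the multilinear polynomial `p` by keeping exactly the Fourier coefficients of `g`
of absolute value at least `2^{-H/(2δ)}` (i.e. `p̂(S) = ĝ(S)` for those `S` and `0`
otherwise).  Then `p` has at most `2^{H/δ}` nonzero Fourier coefficients and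
`E_x[(g(x) − p(x))²] ≤ δ`. -/
theorem stmt13 {n : ℕ} (g : (Fin n → Bool) → ℝ) (hg : IsBooleanFunc g)
    (δ : ℝ) (hδ0 : 0 < δ) (hδ1 : δ ≤ 1)
    (p : (Fin n → Bool) → ℝ)
    (hp : ∀ x, p x = ∑ S : Finset (Fin n),
      (if (2 : ℝ) ^ (-(fEntropy g) / (2 * δ)) ≤ |fCoeff g S| then fCoeff g S else 0)
        * chi S x) :
    ((Finset.univ.filter (fun S : Finset (Fin n) => fCoeff p S ≠ 0)).card : ℝ)
        ≤ (2 : ℝ) ^ (fEntropy g / δ) ∧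
    (∑ x : Fin n → Bool, (g x - p x) ^ 2) / 2 ^ n ≤ δ := by
  set H := fEntropy g with hH
  set θ : ℝ := (2 : ℝ) ^ (-(H) / (2 * δ)) with hθ
  set c : Finset (Fin n) → ℝ :=
    fun S => if θ ≤ |fCoeff g S| then fCoeff g S else 0 with hcdef
  have h2n : ((2:ℝ) ^ n) ≠ 0 := by positivity
  have hcoeff : ∀ T, fCoeff p T = c T := fCoeff_comb c p hp
  -- Parseval for g : sum of squares = 1
  have hsum1 : ∑ S : Finset (Fin n), (fCoeff g S) ^ 2 = 1 := by
    rw [parseval]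
    have : ∀ x : Fin n → Bool, g x ^ 2 = 1 := by
      intro x; rcases hg x with h | h <;> rw [h] <;> norm_num
    simp_rw [this]
    rw [Finset.sum_const, nsmul_eq_mul, mul_one, Finset.card_univ]
    rw [Fintype.card_fun]
    simp [div_self h2n]
  have hsq_le : ∀ S, (fCoeff g S) ^ 2 ≤ 1 := by
    intro S
    calc (fCoeff g S) ^ 2 ≤ ∑ T : Finset (Fin n), (fCoeff g T) ^ 2 :=
          Finset.single_le_sum (f := fun T => (fCoeff g T) ^ 2)
            (fun T _ => sq_nonneg _) (Finset.mem_univ S)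
      _ = 1 := hsum1
  have hterm_nonneg : ∀ S, 0 ≤ (fCoeff g S) ^ 2 * Real.logb 2 (1 / (fCoeff g S) ^ 2) := by
    intro S
    rcases eq_or_ne (fCoeff g S) 0 with h | h
    · simp [h]
    · have hpos : 0 < (fCoeff g S) ^ 2 := by positivity
      have h1 : 1 ≤ 1 / (fCoeff g S) ^ 2 := by
        rw [le_div_iff₀ hpos, one_mul]; exact hsq_le S
      exact mul_nonneg (sq_nonneg _) (Real.logb_nonneg one_lt_two h1)
  have hH0 : 0 ≤ H := Finset.sum_nonneg fun S _ => hterm_nonneg S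
  have hθsq : θ ^ 2 = (2:ℝ) ^ (-(H) / δ) := by
    rw [sq, hθ, ← Real.rpow_add two_pos]
    congr 1
    field_simp
    ring
  have hθpos : 0 < θ := Real.rpow_pos_of_pos two_pos _
  constructor
  · -- counting part
    set K := Finset.univ.filter (fun S : Finset (Fin n) => fCoeff p S ≠ 0) with hK
    have hlow : ∀ S ∈ K, (2:ℝ) ^ (-(H)/δ) ≤ (fCoeff g S) ^ 2 := by
      intro S hS
      rw [hK, Finset.mem_filter] at hS
      have hcS : c S ≠ 0 := by rw [← hcoeff]; exact hS.2
      have hif : θ ≤ |fCoeff g S| := by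
        by_contra h
        simp [hcdef, h] at hcS
      rw [← hθsq]
      calc θ ^ 2 ≤ |fCoeff g S| ^ 2 := by
            exact pow_le_pow_left₀ hθpos.le hif 2
        _ = (fCoeff g S) ^ 2 := sq_abs _
    have hcard : (K.card : ℝ) * (2:ℝ) ^ (-(H)/δ) ≤ 1 := by
      calc (K.card : ℝ) * (2:ℝ) ^ (-(H)/δ)
          ≤ ∑ S ∈ K, (fCoeff g S) ^ 2 := by
            rw [← nsmul_eq_mul]
            exact Finset.card_nsmul_le_sum K _ _ hlow
        _ ≤ ∑ S : Finset (Fin n), (fCoeff g S) ^ 2 :=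
            Finset.sum_le_sum_of_subset_of_nonneg (Finset.subset_univ K)
              (fun S _ _ => sq_nonneg _)
        _ = 1 := hsum1
    have hpow : (0:ℝ) < (2:ℝ) ^ (-(H)/δ) := Real.rpow_pos_of_pos two_pos _
    rw [← le_div_iff₀ hpow] at hcard
    calc (K.card : ℝ) ≤ 1 / (2:ℝ) ^ (-(H)/δ) := hcard
      _ = (2:ℝ) ^ (H/δ) := by
          rw [one_div, ← Real.rpow_neg two_pos.le, neg_div, neg_neg]
  · -- approximation part
    have hresid : (∑ x : Fin n → Bool, (g x - p x) ^ 2) / 2 ^ n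
        = ∑ S : Finset (Fin n), (fCoeff g S - c S) ^ 2 := by
      rw [← parseval (fun x => g x - p x)]
      exact Finset.sum_congr rfl fun S _ => by rw [fCoeff_sub, hcoeff]
    rw [hresid]
    have hdiff : ∀ S : Finset (Fin n), (fCoeff g S - c S) ^ 2
        = if θ ≤ |fCoeff g S| then 0 else (fCoeff g S) ^ 2 := by
      intro S
      by_cases h : θ ≤ |fCoeff g S| <;> simp [hcdef, h]
    rcases eq_or_lt_of_le hH0 with hHzero | hHpos
    · -- H = 0 : all small coefficients vanish
      have hall : ∀ S : Finset (Fin n),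
          (fCoeff g S) ^ 2 * Real.logb 2 (1 / (fCoeff g S) ^ 2) = 0 := by
        have := (Finset.sum_eq_zero_iff_of_nonneg
          (fun S _ => hterm_nonneg S)).1 hHzero.symm
        exact fun S => this S (Finset.mem_univ S)
      have hθ1 : θ = 1 := by
        rw [hθ, ← hHzero]
        norm_num
      have : ∀ S : Finset (Fin n), (fCoeff g S - c S) ^ 2 = 0 := by
        intro S
        rw [hdiff S]
        split_ifs with h
        · rfl
        · rcases eq_or_ne (fCoeff g S) 0 with h0 | h0
          · rw [h0]; norm_num
          · exfalso
            have hpos : 0 < (fCoeff g S) ^ 2 := by positivity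
            have hlt1 : (fCoeff g S) ^ 2 < 1 := by
              have habs : |fCoeff g S| < 1 := by rw [← hθ1]; linarith [not_le.1 h]
              calc (fCoeff g S) ^ 2 = |fCoeff g S| ^ 2 := (sq_abs _).symm
                _ < 1 := by nlinarith [abs_nonneg (fCoeff g S)]
            have hlog : Real.logb 2 (1 / (fCoeff g S) ^ 2) = 0 := by
              rcases mul_eq_zero.1 (hall S) with h' | h'
              · exact absurd h' hpos.ne'
              · exact h'
            have h1 : 1 < 1 / (fCoeff g S) ^ 2 := by
              rw [lt_div_iff₀ hpos, one_mul]; exact hlt1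
            have : 0 < Real.logb 2 (1 / (fCoeff g S) ^ 2) :=
              Real.logb_pos one_lt_two h1
            linarith
      rw [Finset.sum_eq_zero fun S _ => this S]
      exact hδ0.le
    · -- H > 0
      have key : ∀ S : Finset (Fin n), (fCoeff g S - c S) ^ 2 * H
          ≤ δ * ((fCoeff g S) ^ 2 * Real.logb 2 (1 / (fCoeff g S) ^ 2)) := by
        intro S
        rw [hdiff S]
        split_ifs with h
        · rw [zero_mul]
          exact mul_nonneg hδ0.le (hterm_nonneg S)
        · rcases eq_or_ne (fCoeff g S) 0 with h0 | h0
          · rw [h0]; norm_num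
          · have hpos : 0 < (fCoeff g S) ^ 2 := by positivity
            have hlt : (fCoeff g S) ^ 2 < (2:ℝ) ^ (-(H)/δ) := by
              rw [← hθsq]
              calc (fCoeff g S) ^ 2 = |fCoeff g S| ^ 2 := (sq_abs _).symm
                _ < θ ^ 2 := by
                    have := not_le.1 h
                    nlinarith [abs_nonneg (fCoeff g S)]
            have hlog : H / δ < Real.logb 2 (1 / (fCoeff g S) ^ 2) := by
              have h1 : (2:ℝ) ^ (H/δ) < 1 / (fCoeff g S) ^ 2 := by
                rw [lt_div_iff₀ hpos]
                have hmul : (2:ℝ) ^ (H/δ) * (2:ℝ) ^ (-(H)/δ) = 1 := by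
                  rw [← Real.rpow_add two_pos]
                  have he : H/δ + -(H)/δ = 0 := by ring
                  rw [he, Real.rpow_zero]
                calc (2:ℝ) ^ (H/δ) * (fCoeff g S) ^ 2
                    < (2:ℝ) ^ (H/δ) * (2:ℝ) ^ (-(H)/δ) :=
                      mul_lt_mul_of_pos_left hlt (Real.rpow_pos_of_pos two_pos _)
                  _ = 1 := hmul
              calc H / δ = Real.logb 2 ((2:ℝ) ^ (H/δ)) :=
                    (Real.logb_rpow two_pos (by norm_num)).symm
                _ < _ := Real.logb_lt_logb one_lt_two
                    (Real.rpow_pos_of_pos two_pos _) h1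
            have hHle : H ≤ δ * Real.logb 2 (1 / (fCoeff g S) ^ 2) := by
              rw [← div_le_iff₀' hδ0] at *
              linarith [hlog]
            calc (fCoeff g S) ^ 2 * H
                ≤ (fCoeff g S) ^ 2 * (δ * Real.logb 2 (1 / (fCoeff g S) ^ 2)) :=
                  mul_le_mul_of_nonneg_left hHle (sq_nonneg _)
              _ = δ * ((fCoeff g S) ^ 2 * Real.logb 2 (1 / (fCoeff g S) ^ 2)) := by ring
      have hsumkey : (∑ S : Finset (Fin n), (fCoeff g S - c S) ^ 2) * H ≤ δ * H := by
        calc (∑ S : Finset (Fin n), (fCoeff g S - c S) ^ 2) * H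
            = ∑ S : Finset (Fin n), (fCoeff g S - c S) ^ 2 * H := Finset.sum_mul ..
          _ ≤ ∑ S : Finset (Fin n),
              δ * ((fCoeff g S) ^ 2 * Real.logb 2 (1 / (fCoeff g S) ^ 2)) :=
              Finset.sum_le_sum fun S _ => key S
          _ = δ * H := by rw [← Finset.mul_sum, hH, fEntropy]
      exact le_of_mul_le_mul_right hsumkey hHpos
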